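/- Let Π_1,...,Π_K be [0,1]-valued random variables each marginally Uniform(0,1). Then for all t ∈ (0,1), P((∏_{k=1}^K Π_k)^{1/K} ≤ t) ≤ e·t, i.e., e times the geometric mean of arbitrarily dependent uniform p-values is a valid p-value. -/

import Mathlib

open MeasureTheory Set

lemma aux_integrableOn_log_Ioc {c : ℝ} (hc : 0 < c) (hc1 : c ≤ 1) :
    IntegrableOn Real.log (Set.Ioc 0 c) := by
  have hrpow : IntegrableOn (fun u : ℝ => u ^ (-(1/2 : ℝ))) (Set.Ioc 0 c) := by
    have h := intervalIntegral.intervalIntegrable_rpow' (a := 0) (b := c)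
      (r := -(1/2 : ℝ)) (by norm_num)
    rwa [intervalIntegrable_iff_integrableOn_Ioc_of_le hc.le] at h
  refine Integrable.mono (hrpow.const_mul 2) Real.measurable_log.aestronglyMeasurable ?_
  filter_upwards [ae_restrict_mem measurableSet_Ioc] with u hu
  have hu0 : 0 < u := hu.1
  have hu1 : u ≤ 1 := hu.2.trans hc1
  have hlog : Real.log u ≤ 0 := Real.log_nonpos hu0.le hu1
  have hr : 0 < u ^ (-(1/2 : ℝ)) := Real.rpow_pos_of_pos hu0 _
  have key : -Real.log u ≤ 2 * u ^ (-(1/2 : ℝ)) := by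
    have h1 : Real.log (u ^ (-(1/2 : ℝ))) ≤ u ^ (-(1/2 : ℝ)) - 1 :=
      Real.log_le_sub_one_of_pos hr
    rw [Real.log_rpow hu0] at h1
    nlinarith
  rw [Real.norm_eq_abs, Real.norm_eq_abs, abs_of_nonpos hlog,
    abs_of_pos (by positivity : (0:ℝ) < 2 * u ^ (-(1/2 : ℝ)))]
  linarith

lemma aux_integral_log_Ioc {c : ℝ} (hc : 0 < c) (hc1 : c ≤ 1) :
    ∫ u in Set.Ioc 0 c, Real.log u = c * Real.log c - c := by
  have key := intervalIntegral.integral_eq_sub_of_hasDeriv_right_of_le hc.le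
    (f := fun u => u * Real.log u - u) (f' := Real.log)
    ((Real.continuous_mul_log.sub continuous_id).continuousOn)
    (fun x hx => by
      have h := (Real.hasDerivAt_mul_log (ne_of_gt hx.1)).sub (hasDerivAt_id x)
      simp only [add_sub_cancel_right] at h
      exact h.hasDerivWithinAt)
    (by rw [intervalIntegrable_iff_integrableOn_Ioc_of_le hc.le]
        exact aux_integrableOn_log_Ioc hc hc1)
  rw [intervalIntegral.integral_of_le hc.le] at key
  simpa using key

lemma aux_lintegral_bound {t : ℝ} (ht0 : 0 < t) (ht1 : t < 1) :
    ∫⁻ u in Set.Icc (0:ℝ) 1, ENNReal.ofReal (Real.log t + 1 - Real.log u)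
      ≤ ENNReal.ofReal (Real.exp 1 * t) := by
  have het : 0 < Real.exp 1 * t := by positivity
  set c : ℝ := min (Real.exp 1 * t) 1 with hcdef
  have hc0 : 0 < c := lt_min het zero_lt_one
  have hc1 : c ≤ 1 := min_le_right _ _
  have hlogc : Real.log c ≤ Real.log t + 1 := by
    have h1 : Real.log c ≤ Real.log (Real.exp 1 * t) :=
      Real.log_le_log hc0 (min_le_left _ _)
    rwa [Real.log_mul (Real.exp_ne_zero 1) ht0.ne', Real.log_exp, add_comm] at h1
  have hconst : IntegrableOn (fun _ : ℝ => Real.log t + 1) (Set.Ioc 0 c) :=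
    integrableOn_const measure_Ioc_lt_top.ne
  have hint : IntegrableOn (fun u => Real.log t + 1 - Real.log u) (Set.Ioc 0 c) :=
    hconst.sub (aux_integrableOn_log_Ioc hc0 hc1)
  have hnn : 0 ≤ᵐ[volume.restrict (Set.Ioc 0 c)]
      fun u => Real.log t + 1 - Real.log u := by
    filter_upwards [ae_restrict_mem measurableSet_Ioc] with u hu
    have hu0 : (0:ℝ) < u := hu.1
    have : Real.log u ≤ Real.log c := Real.log_le_log hu0 hu.2
    simp only [Pi.zero_apply]
    linarith
  rw [← Measure.restrict_congr_set Ioc_ae_eq_Icc,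
    (Set.Ioc_union_Ioc_eq_Ioc hc0.le hc1).symm,
    lintegral_union measurableSet_Ioc (Set.Ioc_disjoint_Ioc_of_le le_rfl)]
  have hzero2 : ∫⁻ u in Set.Ioc c 1, ENNReal.ofReal (Real.log t + 1 - Real.log u) = 0 := by
    rcases le_or_gt (Real.exp 1 * t) 1 with h | h
    · have hc : c = Real.exp 1 * t := min_eq_left h
      rw [← lintegral_zero (μ := volume.restrict (Set.Ioc c 1))]
      refine setLIntegral_congr_fun measurableSet_Ioc (fun u hu => ?_)
      have hlc : Real.log c ≤ Real.log u := Real.log_le_log hc0 hu.1.le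
      have hceq : Real.log c = Real.log t + 1 := by
        rw [hc, Real.log_mul (Real.exp_ne_zero 1) ht0.ne', Real.log_exp, add_comm]
      rw [ENNReal.ofReal_eq_zero]
      linarith
    · have hc : c = 1 := min_eq_right h.le
      rw [hc, Set.Ioc_self]
      simp
  rw [hzero2, add_zero, ← ofReal_integral_eq_lintegral_ofReal hint hnn]
  have hval : ∫ u in Set.Ioc 0 c, (Real.log t + 1 - Real.log u)
      = c * (Real.log t + 1) - (c * Real.log c - c) := by
    rw [integral_sub hconst (aux_integrableOn_log_Ioc hc0 hc1), setIntegral_const,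
      aux_integral_log_Ioc hc0 hc1, measureReal_def, Real.volume_Ioc, sub_zero,
      ENNReal.toReal_ofReal hc0.le, smul_eq_mul]
  rw [hval]
  apply ENNReal.ofReal_le_ofReal
  rcases le_or_gt (Real.exp 1 * t) 1 with h | h
  · have hc : c = Real.exp 1 * t := min_eq_left h
    have hceq : Real.log c = Real.log t + 1 := by
      rw [hc, Real.log_mul (Real.exp_ne_zero 1) ht0.ne', Real.log_exp, add_comm]
    rw [hceq, hc]; ring_nf; rfl
  · have hc : c = 1 := min_eq_right h.le
    have hle : Real.log (Real.exp 1 * t) ≤ Real.exp 1 * t - 1 :=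
      Real.log_le_sub_one_of_pos het
    rw [Real.log_mul (Real.exp_ne_zero 1) ht0.ne', Real.log_exp] at hle
    rw [hc, Real.log_one]
    linarith

lemma aux_ofReal_sum_le {ι : Type*} (s : Finset ι) (f : ι → ℝ) :
    ENNReal.ofReal (∑ i ∈ s, f i) ≤ ∑ i ∈ s, ENNReal.ofReal (f i) := by
  classical
  induction s using Finset.induction_on with
  | empty => simp
  | insert _ _ hx ih =>
    rw [Finset.sum_insert hx, Finset.sum_insert hx]
    exact (ENNReal.ofReal_add_le).trans (by gcongr)

/-- `e` times the geometric mean of arbitrarily dependent uniform p-values is a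
valid p-value: `P((∏ Π_k)^{1/K} ≤ t) ≤ e·t` for all `t ∈ (0,1)`. -/
theorem e_times_geometric_mean_valid
    {Ω : Type*} [MeasurableSpace Ω] (μ : Measure Ω) [IsProbabilityMeasure μ]
    (K : ℕ) (hK : 0 < K) (P : Fin K → Ω → ℝ)
    (hmeas : ∀ k, Measurable (P k))
    (h01 : ∀ k ω, P k ω ∈ Set.Icc (0:ℝ) 1)
    (hunif : ∀ k, Measure.map (P k) μ = volume.restrict (Set.Icc (0:ℝ) 1)) :
    ∀ t ∈ Set.Ioo (0:ℝ) 1,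
      μ {ω | (∏ k, P k ω) ^ (1 / (K:ℝ)) ≤ t} ≤ ENNReal.ofReal (Real.exp 1 * t) := by
  intro t ht
  obtain ⟨ht0, ht1⟩ := ht
  set A := {ω | (∏ k, P k ω) ^ (1 / (K:ℝ)) ≤ t} with hA
  set g : ℝ → ℝ := fun u => Real.log t + 1 - Real.log u with hg
  set f : Ω → ENNReal := fun ω => ∑ k, ENNReal.ofReal (g (P k ω)) with hf
  have hgmeas : Measurable fun u => ENNReal.ofReal (g u) :=
    (measurable_const.sub Real.measurable_log).ennreal_ofReal
  have hfmeas : Measurable f :=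
    Finset.measurable_sum _ fun k _ => hgmeas.comp (hmeas k)
  -- null set where some P k = 0
  have hzero : ∀ k : Fin K, μ {ω | P k ω = 0} = 0 := by
    intro k
    have h1 : μ (P k ⁻¹' {0}) = Measure.map (P k) μ {0} :=
      (Measure.map_apply (hmeas k) (measurableSet_singleton 0)).symm
    have h2 : (volume.restrict (Set.Icc (0:ℝ) 1)) {0} = 0 := by
      rw [Measure.restrict_apply (measurableSet_singleton 0)]
      exact measure_mono_null Set.inter_subset_left Real.volume_singleton
    show μ (P k ⁻¹' {0}) = 0
    rw [h1, hunif k, h2]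
  set N := ⋃ k : Fin K, {ω | P k ω = 0} with hNdef
  have hN : μ N = 0 := measure_iUnion_null hzero
  -- pointwise bound on A \ N
  have hpt : ∀ ω ∈ A \ N, (K : ENNReal) ≤ f ω := by
    intro ω hω
    obtain ⟨hωA, hωN⟩ := hω
    have hpos : ∀ k : Fin K, 0 < P k ω := by
      intro k
      have hne : P k ω ≠ 0 := by
        intro h; exact hωN (Set.mem_iUnion.mpr ⟨k, h⟩)
      exact lt_of_le_of_ne (h01 k ω).1 (Ne.symm hne)
    have hprodpos : 0 < ∏ k, P k ω := Finset.prod_pos fun k _ => hpos k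
    have hKne : (K : ℝ) ≠ 0 := Nat.cast_ne_zero.mpr hK.ne'
    have hle : ∏ k, P k ω ≤ t ^ (K : ℝ) := by
      have h1 : ((∏ k, P k ω) ^ (1 / (K:ℝ))) ^ (K:ℝ) ≤ t ^ (K:ℝ) :=
        Real.rpow_le_rpow (Real.rpow_nonneg hprodpos.le _) hωA (Nat.cast_nonneg K)
      rwa [← Real.rpow_mul hprodpos.le, one_div_mul_cancel hKne, Real.rpow_one] at h1
    have hlog : ∑ k, Real.log (P k ω) ≤ (K:ℝ) * Real.log t := by
      have h2 : Real.log (∏ k, P k ω) ≤ Real.log (t ^ (K:ℝ)) :=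
        Real.log_le_log hprodpos hle
      rwa [Real.log_prod (fun k _ => (hpos k).ne'), Real.log_rpow ht0] at h2
    have hsum : (K : ℝ) ≤ ∑ k, g (P k ω) := by
      have hs : ∑ k, g (P k ω) = (K:ℝ) * (Real.log t + 1) - ∑ k, Real.log (P k ω) := by
        simp only [hg, Finset.sum_sub_distrib, Finset.sum_const, Finset.card_univ,
          Fintype.card_fin, nsmul_eq_mul]
      rw [hs]; nlinarith
    calc (K : ENNReal) = ENNReal.ofReal (K : ℝ) := by simp
      _ ≤ ENNReal.ofReal (∑ k, g (P k ω)) := ENNReal.ofReal_le_ofReal hsum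
      _ ≤ ∑ k, ENNReal.ofReal (g (P k ω)) := aux_ofReal_sum_le _ _
  have hμA : μ A ≤ μ (A \ N) := by
    calc μ A ≤ μ ((A \ N) ∪ N) := measure_mono (fun ω hω => by
            by_cases h : ω ∈ N
            · exact Or.inr h
            · exact Or.inl ⟨hω, h⟩)
      _ ≤ μ (A \ N) + μ N := measure_union_le _ _
      _ = μ (A \ N) := by rw [hN, add_zero]
  have step : (K : ENNReal) * μ (A \ N) ≤ ∫⁻ ω, f ω ∂μ := by
    calc (K : ENNReal) * μ (A \ N)
        ≤ (K : ENNReal) * μ {ω | (K : ENNReal) ≤ f ω} := by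
          gcongr
          exact fun ω hω => hpt ω hω
      _ ≤ ∫⁻ ω, f ω ∂μ := mul_meas_ge_le_lintegral₀ hfmeas.aemeasurable _
  have hint : ∫⁻ ω, f ω ∂μ ≤ (K : ENNReal) * ENNReal.ofReal (Real.exp 1 * t) := by
    have hm : ∀ k ∈ Finset.univ, Measurable fun ω => ENNReal.ofReal (g (P k ω)) :=
      fun k _ => hgmeas.comp (hmeas k)
    rw [hf, lintegral_finset_sum _ hm]
    have heach : ∀ k : Fin K, ∫⁻ ω, ENNReal.ofReal (g (P k ω)) ∂μ
        ≤ ENNReal.ofReal (Real.exp 1 * t) := by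
      intro k
      have := lintegral_map (μ := μ) hgmeas (hmeas k)
      rw [hunif k] at this
      rw [← this]
      exact aux_lintegral_bound ht0 ht1
    calc ∑ k : Fin K, ∫⁻ ω, ENNReal.ofReal (g (P k ω)) ∂μ
        ≤ ∑ _k : Fin K, ENNReal.ofReal (Real.exp 1 * t) :=
          Finset.sum_le_sum fun k _ => heach k
      _ = (K : ENNReal) * ENNReal.ofReal (Real.exp 1 * t) := by
          simp [Finset.sum_const, Finset.card_univ, nsmul_eq_mul]
  have hfinal : (K : ENNReal) * μ A ≤ (K : ENNReal) * ENNReal.ofReal (Real.exp 1 * t) := by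
    calc (K : ENNReal) * μ A ≤ (K : ENNReal) * μ (A \ N) := by gcongr
      _ ≤ ∫⁻ ω, f ω ∂μ := step
      _ ≤ _ := hint
  have hKne0 : (K : ENNReal) ≠ 0 := Nat.cast_ne_zero.mpr hK.ne'
  have hKnetop : (K : ENNReal) ≠ ⊤ := ENNReal.natCast_ne_top K
  exact (ENNReal.mul_le_mul_iff_right hKne0 hKnetop).mp hfinal
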